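/- Suppose W(φ) \ ↓Z = ∅, Γ \ ↓Z ≠ ∅, and ∼ = Γ × Γ (i.e., any two points of Γ are ∼-equivalent), and let θ ∈ P(φ). Then Eigen(σ_{φ,𝔴}, V^Γ) = {r ∈ F \ {0} : 𝔴_θ · 𝔴_{φ(θ)} ⋯ 𝔴_{φ^{per(θ)−1}(θ)} = r^{per(θ)}} in case φ(Γ \ Z) = Γ, and Eigen(σ_{φ,𝔴}, V^Γ) = {r ∈ F \ {0} : 𝔴_θ · 𝔴_{φ(θ)} ⋯ 𝔴_{φ^{per(θ)−1}(θ)} = r^{per(θ)}} ∪ {0} in case φ(Γ \ Z) ≠ Γ. -/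

import Mathlib

open Function Set

/-- The weighted generalized shift `σ_{φ,𝔴}` on `V^Γ`,
sending `(x_α)_α` to `(𝔴_α • x_{φ(α)})_α`. -/
noncomputable def shiftW {F V Γ : Type*} [Field F] [AddCommGroup V] [Module F V]
    (φ : Γ → Γ) (w : Γ → F) : (Γ → V) →ₗ[F] (Γ → V) where
  toFun x := fun α => w α • x (φ α)
  map_add' x y := by funext α; simp
  map_smul' c x := by
    funext α
    simp only [Pi.smul_apply, RingHom.id_apply]
    rw [smul_comm]

/-- The set of eigenvalues of a linear self-map `T` of `W`:
all `r` such that `T x = r • x` for some nonzero `x`. -/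
def Eigen {F W : Type*} [Field F] [AddCommGroup W] [Module F W] (T : W →ₗ[F] W) : Set F :=
  {r | ∃ x : W, x ≠ 0 ∧ T x = r • x}

/-- `↓Z = ⋃_{n ≥ 0} φ^{-n}(Z)` where `Z = {α : 𝔴_α = 0}`. -/
def downZ {F Γ : Type*} [Field F] (φ : Γ → Γ) (w : Γ → F) : Set Γ :=
  ⋃ n : ℕ, φ^[n] ⁻¹' {α | w α = 0}

/-- Wandering points of `φ`: points `α` such that the sequence `(φ^n(α))_{n ≥ 1}` is injective. -/
def wanderSet {Γ : Type*} (φ : Γ → Γ) : Set Γ :=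
  {α | Function.Injective fun n : ℕ => φ^[n + 1] α}

/-- Periodic points of `φ`: points `α` with `φ^n(α) = α` for some `n ≥ 1`. -/
def periodicSet {Γ : Type*} (φ : Γ → Γ) : Set Γ :=
  {α | ∃ n : ℕ, 1 ≤ n ∧ φ^[n] α = α}

/-- `per(α) = min {n ≥ 1 : φ^n(α) = α}` for a periodic point `α`. -/
noncomputable def perOf {Γ : Type*} (φ : Γ → Γ) (α : Γ) : ℕ :=
  sInf {n : ℕ | 1 ≤ n ∧ φ^[n] α = α}

section Aux
variable {F Γ : Type*} [Field F] (φ : Γ → Γ) (w : Γ → F) (θ : Γ) (r : F)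

noncomputable def uA (m : ℕ) : F :=
  r ^ m / ∏ j ∈ Finset.range m, w (φ^[j] θ)

noncomputable def DA (α : Γ) (n m : ℕ) : F :=
  (∏ i ∈ Finset.range n, w (φ^[i] α)) * uA φ w θ r m / r ^ n

variable {φ w θ r}

lemma prA_ne (hWt : ∀ j, w (φ^[j] θ) ≠ 0) (m : ℕ) :
    (∏ j ∈ Finset.range m, w (φ^[j] θ)) ≠ 0 :=
  Finset.prod_ne_zero_iff.2 fun j _ => hWt j

lemma uA_succ (hr : r ≠ 0) (hWt : ∀ j, w (φ^[j] θ) ≠ 0) (m : ℕ) :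
    w (φ^[m] θ) * uA φ w θ r (m + 1) = r * uA φ w θ r m := by
  unfold uA
  rw [Finset.prod_range_succ, pow_succ]
  have h1 := prA_ne hWt m
  have h2 := hWt m
  field_simp

lemma uA_period (hr : r ≠ 0) (hWt : ∀ j, w (φ^[j] θ) ≠ 0) {p : ℕ}
    (hpθ : φ^[p] θ = θ) (hP : ∏ j ∈ Finset.range p, w (φ^[j] θ) = r ^ p) (m : ℕ) :
    uA φ w θ r (m + p) = uA φ w θ r m := by
  unfold uA
  have key : ∏ j ∈ Finset.range (m + p), w (φ^[j] θ)
      = r ^ p * ∏ j ∈ Finset.range m, w (φ^[j] θ) := by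
    rw [add_comm, Finset.prod_range_add, hP]
    congr 1
    refine Finset.prod_congr rfl fun j _ => ?_
    rw [add_comm p j, Function.iterate_add_apply, hpθ]
  rw [key, pow_add]
  have h1 := prA_ne hWt m
  field_simp

lemma uA_eq (hr : r ≠ 0) (hWt : ∀ j, w (φ^[j] θ) ≠ 0) {p : ℕ}
    (hpθ : φ^[p] θ = θ) (hP : ∏ j ∈ Finset.range p, w (φ^[j] θ) = r ^ p)
    (hinj : ∀ a b : ℕ, φ^[a] θ = φ^[b] θ → a % p = b % p)
    {a b : ℕ} (hab : φ^[a] θ = φ^[b] θ) : uA φ w θ r a = uA φ w θ r b := by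
  have hk : ∀ c k : ℕ, uA φ w θ r (c + p * k) = uA φ w θ r c := by
    intro c k
    induction k with
    | zero => simp
    | succ k ih =>
      rw [mul_add, mul_one, ← add_assoc, uA_period hr hWt hpθ hP, ih]
  have h := hinj a b hab
  calc uA φ w θ r a = uA φ w θ r (a % p + p * (a / p)) := by rw [Nat.mod_add_div]
    _ = uA φ w θ r (a % p) := hk _ _
    _ = uA φ w θ r (b % p) := by rw [h]
    _ = uA φ w θ r (b % p + p * (b / p)) := (hk _ _).symm
    _ = uA φ w θ r b := by rw [Nat.mod_add_div]

lemma iter_shift {α : Γ} {n m : ℕ} (hnm : φ^[n] α = φ^[m] θ) (k : ℕ) :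
    φ^[n + k] α = φ^[m + k] θ := by
  rw [add_comm n k, add_comm m k, Function.iterate_add_apply, Function.iterate_add_apply, hnm]

lemma DA_step (hr : r ≠ 0) (hWt : ∀ j, w (φ^[j] θ) ≠ 0) {α : Γ} {n m : ℕ}
    (hnm : φ^[n] α = φ^[m] θ) :
    DA φ w θ r α (n + 1) (m + 1) = DA φ w θ r α n m := by
  unfold DA
  rw [Finset.prod_range_succ, hnm, pow_succ]
  have h1 := uA_succ hr hWt m
  have h2 : uA φ w θ r (m + 1) = r * uA φ w θ r m / w (φ^[m] θ) := by
    field_simp [hWt m]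
    linear_combination h1
  rw [h2]
  field_simp [hWt m]

lemma DA_shift (hr : r ≠ 0) (hWt : ∀ j, w (φ^[j] θ) ≠ 0) {α : Γ} {n m : ℕ}
    (hnm : φ^[n] α = φ^[m] θ) (k : ℕ) :
    DA φ w θ r α (n + k) (m + k) = DA φ w θ r α n m := by
  induction k with
  | zero => rfl
  | succ k ih =>
    rw [← add_assoc, ← add_assoc, DA_step hr hWt (iter_shift hnm k), ih]

lemma DA_welldef (hr : r ≠ 0) (hWt : ∀ j, w (φ^[j] θ) ≠ 0) {p : ℕ}
    (hpθ : φ^[p] θ = θ) (hP : ∏ j ∈ Finset.range p, w (φ^[j] θ) = r ^ p)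
    (hinj : ∀ a b : ℕ, φ^[a] θ = φ^[b] θ → a % p = b % p)
    {α : Γ} {n m n' m' : ℕ} (h1 : φ^[n] α = φ^[m] θ) (h2 : φ^[n'] α = φ^[m'] θ) :
    DA φ w θ r α n m = DA φ w θ r α n' m' := by
  rw [← DA_shift hr hWt h1 n', ← DA_shift hr hWt h2 n]
  have e1 := iter_shift h1 n'
  have e2 := iter_shift h2 n
  rw [add_comm n' n] at e2
  have hu : uA φ w θ r (m + n') = uA φ w θ r (m' + n) :=
    uA_eq hr hWt hpθ hP hinj (e1.symm.trans e2)
  unfold DA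
  rw [hu, add_comm n' n]

lemma DA_eigen (hr : r ≠ 0) (hWt : ∀ j, w (φ^[j] θ) ≠ 0) {α : Γ} {n m : ℕ}
    (hnm : φ^[n] α = φ^[m] θ) :
    w α * DA φ w θ r (φ α) n (m + 1) = r * DA φ w θ r α n m := by
  rw [← DA_step hr hWt hnm]
  unfold DA
  have key : w α * ∏ i ∈ Finset.range n, w (φ^[i] (φ α))
      = ∏ i ∈ Finset.range (n + 1), w (φ^[i] α) := by
    rw [Finset.prod_range_succ']
    simp only [Function.iterate_succ_apply, Function.iterate_zero_apply]
    ring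
  rw [pow_succ]
  rw [← key]
  field_simp

end Aux

theorem eigen_of_no_wandering_outside_downZ
    {F V Γ : Type*} [Field F] [AddCommGroup V] [Module F V] [Nonempty Γ] [Nontrivial V]
    (φ : Γ → Γ) (w : Γ → F)
    (h1 : wanderSet φ \ downZ φ w = ∅)
    (h2 : ((Set.univ : Set Γ) \ downZ φ w).Nonempty)
    (h3 : ∀ α β : Γ, ∃ n m : ℕ, 1 ≤ n ∧ 1 ≤ m ∧ φ^[n] α = φ^[m] β)
    (θ : Γ) (hθ : θ ∈ periodicSet φ) :
    (φ '' {α : Γ | w α ≠ 0} = Set.univ →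
      Eigen (shiftW (V := V) φ w) =
        {r : F | r ≠ 0 ∧ ∏ i ∈ Finset.range (perOf φ θ), w (φ^[i] θ) = r ^ perOf φ θ}) ∧
    (φ '' {α : Γ | w α ≠ 0} ≠ Set.univ →
      Eigen (shiftW (V := V) φ w) =
        {r : F | r ≠ 0 ∧ ∏ i ∈ Finset.range (perOf φ θ), w (φ^[i] θ) = r ^ perOf φ θ}
          ∪ {0}) := by
  classical
  clear h1
  obtain ⟨γ, -, hγ⟩ := h2
  set p := perOf φ θ with hpdef
  obtain ⟨hp1, hpθ⟩ : 1 ≤ p ∧ φ^[p] θ = θ := Nat.sInf_mem hθ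
  have hpmin : ∀ n, 1 ≤ n → φ^[n] θ = θ → p ≤ n := fun n ha hb => Nat.sInf_le ⟨ha, hb⟩
  have hmul : ∀ k, φ^[p * k] θ = θ := by
    intro k
    rw [Function.iterate_mul]
    exact Function.iterate_fixed hpθ k
  have hmod : ∀ a, φ^[a] θ = φ^[a % p] θ := by
    intro a
    conv_lhs => rw [← Nat.mod_add_div a p, Function.iterate_add_apply, hmul]
  -- injectivity mod p
  have hinj : ∀ a b : ℕ, φ^[a] θ = φ^[b] θ → a % p = b % p := by
    have key : ∀ a b : ℕ, a < p → b < p → a ≤ b → φ^[a] θ = φ^[b] θ → a = b := by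
      intro a b ha hb hab he
      by_contra hne
      have hlt : a < b := lt_of_le_of_ne hab hne
      have hfix : φ^[p - b + a] θ = θ := by
        have h := congrArg (φ^[p - b]) he
        rw [← Function.iterate_add_apply, ← Function.iterate_add_apply,
          Nat.sub_add_cancel hb.le, hpθ] at h
        exact h
      have := hpmin _ (by omega) hfix
      omega
    intro a b hab
    rw [hmod a, hmod b] at hab
    have ha := Nat.mod_lt a (show 0 < p by omega)
    have hb := Nat.mod_lt b (show 0 < p by omega)
    rcases le_total (a % p) (b % p) with h | h
    · exact key _ _ ha hb h hab
    · exact (key _ _ hb ha h hab.symm).symm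
  -- weights along the cycle of θ are nonzero
  have hWt : ∀ j, w (φ^[j] θ) ≠ 0 := by
    intro j hj
    apply hγ
    obtain ⟨n, m, -, -, he⟩ := h3 γ θ
    have hpq : p = (p - 1) + 1 := by omega
    have hk : m + (j + m * (p - 1)) = j + p * m := by
      conv_rhs => rw [hpq]
      ring
    have hiter : φ^[n + (j + m * (p - 1))] γ = φ^[j] θ := by
      rw [iter_shift he, hk, Function.iterate_add_apply, hmul]
    exact Set.mem_iUnion.2 ⟨n + (j + m * (p - 1)), by
      simp only [Set.mem_preimage, Set.mem_setOf_eq, hiter]; exact hj⟩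
  have hshift : ∀ (x : Γ → V) (β : Γ), shiftW (V := V) φ w x β = w β • x (φ β) := fun _ _ => rfl
  -- main characterization for nonzero r
  have main : ∀ r : F, r ≠ 0 →
      (r ∈ Eigen (shiftW (V := V) φ w) ↔ ∏ i ∈ Finset.range p, w (φ^[i] θ) = r ^ p) := by
    intro r hr
    constructor
    · rintro ⟨x, hx0, hx⟩
      have hpt : ∀ β, w β • x (φ β) = r • x β := fun β => congrFun hx β
      have iter : ∀ (α : Γ) (k : ℕ),
          (∏ i ∈ Finset.range k, w (φ^[i] α)) • x (φ^[k] α) = r ^ k • x α := by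
        intro α k
        induction k with
        | zero => simp
        | succ k ih =>
          calc (∏ i ∈ Finset.range (k + 1), w (φ^[i] α)) • x (φ^[k + 1] α)
              = (∏ i ∈ Finset.range k, w (φ^[i] α)) • (w (φ^[k] α) • x (φ (φ^[k] α))) := by
                rw [Finset.prod_range_succ, Function.iterate_succ_apply', mul_smul]
            _ = (∏ i ∈ Finset.range k, w (φ^[i] α)) • (r • x (φ^[k] α)) := by rw [hpt]
            _ = r • ((∏ i ∈ Finset.range k, w (φ^[i] α)) • x (φ^[k] α)) := smul_comm _ _ _
            _ = r • (r ^ k • x α) := by rw [ih]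
            _ = r ^ (k + 1) • x α := by rw [smul_smul, ← pow_succ']
      obtain ⟨α, hα⟩ : ∃ α, x α ≠ 0 := by
        by_contra h
        push_neg at h
        exact hx0 (funext h)
      obtain ⟨n, m, -, -, he⟩ := h3 α θ
      have h1 : x (φ^[m] θ) ≠ 0 := by
        intro h
        have hi := iter α n
        rw [he, h, smul_zero] at hi
        exact hα ((smul_eq_zero.1 hi.symm).resolve_left (pow_ne_zero n hr))
      have h2 : x θ ≠ 0 := by
        intro h
        have hi := iter θ m
        rw [h, smul_zero] at hi
        exact h1 ((smul_eq_zero.1 hi).resolve_left (prA_ne hWt m))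
      have hi := iter θ p
      rw [hpθ] at hi
      have : ((∏ i ∈ Finset.range p, w (φ^[i] θ)) - r ^ p) • x θ = 0 := by
        rw [sub_smul, hi, sub_self]
      exact sub_eq_zero.1 ((smul_eq_zero.1 this).resolve_right h2)
    · intro hP
      obtain ⟨v, hv⟩ := exists_ne (0 : V)
      choose n m hn1 hm1 hnm using fun α => h3 α θ
      refine ⟨fun α => DA φ w θ r α (n α) (m α) • v, ?_, ?_⟩
      · intro h
        have hxθ : DA φ w θ r θ (n θ) (m θ) = 1 := by
          have h00 : φ^[0] θ = φ^[0] θ := rfl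
          rw [DA_welldef hr hWt hpθ hP hinj (hnm θ) h00]
          simp [DA, uA]
        have := congrFun h θ
        rw [hxθ, one_smul] at this
        exact hv this
      · funext α
        rw [hshift]
        show w α • (DA φ w θ r (φ α) (n (φ α)) (m (φ α)) • v)
            = r • (DA φ w θ r α (n α) (m α) • v)
        have hval : φ^[n α] (φ α) = φ^[m α + 1] θ := by
          rw [← Function.iterate_succ_apply, Function.iterate_succ_apply', hnm α]
          exact (Function.iterate_succ_apply' φ (m α) θ).symm
        rw [DA_welldef hr hWt hpθ hP hinj (hnm (φ α)) hval, smul_smul, smul_smul,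
          DA_eigen hr hWt (hnm α)]
  -- zero eigenvalue characterization
  have zero_iff : (0 : F) ∈ Eigen (shiftW (V := V) φ w) ↔ φ '' {α | w α ≠ 0} ≠ Set.univ := by
    constructor
    · rintro ⟨x, hx0, hx⟩ heq
      obtain ⟨β, hβ⟩ : ∃ β, x β ≠ 0 := by
        by_contra h
        push_neg at h
        exact hx0 (funext h)
      have : β ∈ φ '' {α | w α ≠ 0} := heq ▸ Set.mem_univ β
      obtain ⟨α, hwα, hφα⟩ := this
      have h := congrFun hx α
      rw [hshift, hφα, zero_smul, Pi.zero_apply] at h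
      exact hβ ((smul_eq_zero.1 h).resolve_left hwα)
    · intro hne
      obtain ⟨β, hβ⟩ := Set.ne_univ_iff_exists_notMem _ |>.1 hne
      obtain ⟨v, hv⟩ := exists_ne (0 : V)
      refine ⟨fun γ' => if γ' = β then v else 0, ?_, ?_⟩
      · intro h
        have := congrFun h β
        simp at this
        exact hv this
      · funext α
        rw [hshift, zero_smul, Pi.zero_apply]
        by_cases h : φ α = β
        · have hw : w α = 0 := by
            by_contra hw
            exact hβ ⟨α, hw, h⟩
          simp [h, hw]
        · simp [h]
  constructor
  · intro hsurj
    ext r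
    simp only [Set.mem_setOf_eq]
    constructor
    · intro hrE
      have hr0 : r ≠ 0 := by
        rintro rfl
        exact (zero_iff.1 hrE) hsurj
      exact ⟨hr0, (main r hr0).1 hrE⟩
    · rintro ⟨hr0, hP⟩
      exact (main r hr0).2 hP
  · intro hnsurj
    ext r
    simp only [Set.mem_union, Set.mem_setOf_eq, Set.mem_singleton_iff]
    constructor
    · intro hrE
      by_cases hr0 : r = 0
      · exact Or.inr hr0
      · exact Or.inl ⟨hr0, (main r hr0).1 hrE⟩
    · rintro (⟨hr0, hP⟩ | rfl)
      · exact (main r hr0).2 hP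
      · exact zero_iff.2 hnsurj
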